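/- Let A be a packing bound function. If C and C' are bounded Borel subsets of the same ambient space ℝ^d, then A(C ∪ C') ≤ A(C) + A(C'). -/

import Mathlib

open scoped Pointwise
open MeasureTheory Bornology Filter

/-- A packing bound function: an assignment of a nonnegative real number to every bounded
Borel subset of every Euclidean space, satisfying the sphere bound, Lipschitz, union,
and mesh axioms. -/
structure PackingBoundFunction where
  toFun : ∀ d : ℕ, Set (EuclideanSpace ℝ (Fin d)) → ℝ
  nonneg : ∀ (d : ℕ) (C : Set (EuclideanSpace ℝ (Fin d))),
    IsBounded C → MeasurableSet C → 0 ≤ toFun d C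
  sphere_bound : ∀ (d : ℕ) (C : Set (EuclideanSpace ℝ (Fin d))),
    IsBounded C → MeasurableSet C → C.Nonempty →
    (∃ z, C ⊆ Metric.ball z 1) → toFun d C = 1
  lipschitz : ∀ (d d' : ℕ) (C : Set (EuclideanSpace ℝ (Fin d)))
    (C' : Set (EuclideanSpace ℝ (Fin d'))),
    IsBounded C → MeasurableSet C → IsBounded C' → MeasurableSet C' →
    (∃ ψ : EuclideanSpace ℝ (Fin d) → EuclideanSpace ℝ (Fin d'),
      (∀ x ∈ C, ψ x ∈ C') ∧ ∀ x ∈ C, ∀ y ∈ C, dist x y ≤ dist (ψ x) (ψ y)) →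
    toFun d C ≤ toFun d' C'
  union : ∀ (d : ℕ) (C C' : Set (EuclideanSpace ℝ (Fin d))),
    IsBounded C → MeasurableSet C → IsBounded C' → MeasurableSet C' →
    (∀ x ∈ C, ∀ x' ∈ C', 2 ≤ dist x x') →
    toFun d (C ∪ C') = toFun d C + toFun d C'
  mesh : ∀ (ε : ℝ), 0 < ε → ∀ (d : ℕ) (C C' : Set (EuclideanSpace ℝ (Fin d))),
    IsBounded C → MeasurableSet C → IsBounded C' → MeasurableSet C' →
    C ⊆ Metric.thickening ε C' →
    toFun d ((1 / (1 + ε)) • C) ≤ toFun d C'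


noncomputable def pbEmb (d : ℕ) (c : ℝ) (x : EuclideanSpace ℝ (Fin d)) :
    EuclideanSpace ℝ (Fin (d+1)) := WithLp.toLp 2 (Fin.snoc (α := fun _ => ℝ) (fun i => x i) c)

lemma pbEmb_dist (d : ℕ) (c c' : ℝ) (x y : EuclideanSpace ℝ (Fin d)) :
    dist (pbEmb d c x) (pbEmb d c' y) = Real.sqrt (dist x y ^ 2 + (c - c') ^ 2) := by
  have h1 : dist x y ^ 2 = ∑ i, dist (x i) (y i) ^ 2 := by
    rw [EuclideanSpace.dist_eq]
    exact Real.sq_sqrt (Finset.sum_nonneg fun i _ => sq_nonneg _)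
  rw [EuclideanSpace.dist_eq, Fin.sum_univ_castSucc, h1]
  have h2 : ∀ i : Fin d, pbEmb d c x i.castSucc = x i := fun i => by simp [pbEmb]
  have h2' : ∀ i : Fin d, pbEmb d c' y i.castSucc = y i := fun i => by simp [pbEmb]
  have h3 : pbEmb d c x (Fin.last d) = c := by simp [pbEmb]
  have h3' : pbEmb d c' y (Fin.last d) = c' := by simp [pbEmb]
  congr 1
  have : ∑ i : Fin d, dist (pbEmb d c x i.castSucc) (pbEmb d c' y i.castSucc) ^ 2
      = ∑ i : Fin d, dist (x i) (y i) ^ 2 :=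
    Finset.sum_congr rfl fun i _ => by rw [h2 i, h2' i]
  rw [this, h3, h3', Real.dist_eq, sq_abs]

lemma pbEmb_dist_same (d : ℕ) (c : ℝ) (x y : EuclideanSpace ℝ (Fin d)) :
    dist (pbEmb d c x) (pbEmb d c y) = dist x y := by
  rw [pbEmb_dist]; simp [Real.sqrt_sq dist_nonneg]

lemma pbEmb_isometry (d : ℕ) (c : ℝ) : Isometry (pbEmb d c) :=
  Isometry.of_dist_eq (pbEmb_dist_same d c)

lemma dist_le_pbEmb (d : ℕ) (c c' : ℝ) (x y : EuclideanSpace ℝ (Fin d)) :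
    dist x y ≤ dist (pbEmb d c x) (pbEmb d c' y) := by
  rw [pbEmb_dist]
  calc dist x y = Real.sqrt (dist x y ^ 2) := (Real.sqrt_sq dist_nonneg).symm
    _ ≤ _ := Real.sqrt_le_sqrt (by nlinarith [sq_nonneg (c - c')])

noncomputable def pbProj (d : ℕ) (z : EuclideanSpace ℝ (Fin (d+1))) :
    EuclideanSpace ℝ (Fin d) := WithLp.toLp 2 (Fin.init z)

lemma pbProj_pbEmb (d : ℕ) (c : ℝ) (x : EuclideanSpace ℝ (Fin d)) :
    pbProj d (pbEmb d c x) = x := by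
  ext i; simp [pbProj, pbEmb, Fin.init, Fin.snoc_castSucc]

lemma pbEmb_image_bounded (d : ℕ) (c : ℝ) {C : Set (EuclideanSpace ℝ (Fin d))}
    (h : IsBounded C) : IsBounded (pbEmb d c '' C) :=
  ((pbEmb_isometry d c).lipschitz.isBounded_image h)

lemma pbEmb_image_measurable (d : ℕ) (c : ℝ) {C : Set (EuclideanSpace ℝ (Fin d))}
    (h : MeasurableSet C) : MeasurableSet (pbEmb d c '' C) :=
  ((pbEmb_isometry d c).isClosedEmbedding.measurableEmbedding.measurableSet_image).2 h


/-- The union bound: `A(C ∪ C') ≤ A(C) + A(C')` for bounded Borel subsets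
of the same Euclidean space. -/
theorem packingBoundFunction_union_bound (A : PackingBoundFunction) (d : ℕ)
    (C C' : Set (EuclideanSpace ℝ (Fin d)))
    (hCb : IsBounded C) (hCm : MeasurableSet C)
    (hC'b : IsBounded C') (hC'm : MeasurableSet C') :
    A.toFun d (C ∪ C') ≤ A.toFun d C + A.toFun d C' := by
  classical
  set D1 : Set (EuclideanSpace ℝ (Fin (d+1))) := pbEmb d 0 '' C with hD1
  set D2 : Set (EuclideanSpace ℝ (Fin (d+1))) := pbEmb d 2 '' (C' \ C) with hD2
  have hdb : IsBounded (C' \ C) := hC'b.subset Set.diff_subset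
  have hdm : MeasurableSet (C' \ C) := hC'm.diff hCm
  have hD1b : IsBounded D1 := pbEmb_image_bounded d 0 hCb
  have hD1m : MeasurableSet D1 := pbEmb_image_measurable d 0 hCm
  have hD2b : IsBounded D2 := pbEmb_image_bounded d 2 hdb
  have hD2m : MeasurableSet D2 := pbEmb_image_measurable d 2 hdm
  -- Step 1 : A (C ∪ C') ≤ A (D1 ∪ D2)
  have step1 : A.toFun d (C ∪ C') ≤ A.toFun (d+1) (D1 ∪ D2) := by
    apply A.lipschitz d (d+1) (C ∪ C') (D1 ∪ D2) (hCb.union hC'b) (hCm.union hC'm)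
      (hD1b.union hD2b) (hD1m.union hD2m)
    refine ⟨fun x => if x ∈ C then pbEmb d 0 x else pbEmb d 2 x, ?_, ?_⟩
    · intro x hx
      by_cases h : x ∈ C
      · simp only [h, if_true]
        exact Or.inl ⟨x, h, rfl⟩
      · simp only [h, if_false]
        exact Or.inr ⟨x, ⟨hx.resolve_left h, h⟩, rfl⟩
    · intro x _ y _
      by_cases hx : x ∈ C <;> by_cases hy : y ∈ C <;>
        simp only [hx, hy, if_true, if_false] <;> exact dist_le_pbEmb d _ _ x y
  -- Step 2 : union axiom
  have step2 : A.toFun (d+1) (D1 ∪ D2) = A.toFun (d+1) D1 + A.toFun (d+1) D2 := by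
    apply A.union (d+1) D1 D2 hD1b hD1m hD2b hD2m
    rintro _ ⟨x, -, rfl⟩ _ ⟨y, -, rfl⟩
    rw [pbEmb_dist]
    have : (2 : ℝ) = Real.sqrt (0 + (0 - 2) ^ 2) := by
      rw [zero_add]
      norm_num
    calc (2:ℝ) = Real.sqrt (0 + (0 - 2)^2) := this
      _ ≤ _ := Real.sqrt_le_sqrt (by nlinarith [sq_nonneg (dist x y)])
  -- Step 3 : project back
  have step3 : A.toFun (d+1) D1 ≤ A.toFun d C := by
    apply A.lipschitz (d+1) d D1 C hD1b hD1m hCb hCm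
    refine ⟨pbProj d, ?_, ?_⟩
    · rintro _ ⟨x, hx, rfl⟩; rw [pbProj_pbEmb]; exact hx
    · rintro _ ⟨x, -, rfl⟩ _ ⟨y, -, rfl⟩
      rw [pbProj_pbEmb, pbProj_pbEmb, pbEmb_dist_same]
  have step4 : A.toFun (d+1) D2 ≤ A.toFun d C' := by
    apply A.lipschitz (d+1) d D2 C' hD2b hD2m hC'b hC'm
    refine ⟨pbProj d, ?_, ?_⟩
    · rintro _ ⟨x, hx, rfl⟩; rw [pbProj_pbEmb]; exact hx.1
    · rintro _ ⟨x, -, rfl⟩ _ ⟨y, -, rfl⟩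
      rw [pbProj_pbEmb, pbProj_pbEmb, pbEmb_dist_same]
  linarith
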